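/- Let X be a compact Hausdorff space and B the spil of pairs (O,K) with O open ⊆ K compact, with relation (O₀,K₀) ≺ (O₁,K₁) iff K₀ ⊆ O₁, involution (O,K)' = (X∖K, X∖O), and componentwise lattice operations. Then the map x ↦ F_x := {(O,K) ∈ B : x ∈ O} is a homeomorphism from X onto spec(B), the space of prime ≺-filters on B with the topology generated by the sets O_a = {F : a ∈ F}. -/

import Mathlib

/-- A strong proximity involution lattice (spil), stated unbundled:
`sup`, `inf` a bounded distributive lattice structure, `inv` an involution,
`prec` the proximity relation. Finite joins/meets are via list folds
(empty join is `bot`, empty meet is `top`). -/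
structure IsSpil {B : Type*} (sup inf : B → B → B) (inv : B → B) (bot top : B)
    (prec : B → B → Prop) : Prop where
  sup_comm : ∀ a b, sup a b = sup b a
  sup_assoc : ∀ a b c, sup (sup a b) c = sup a (sup b c)
  inf_comm : ∀ a b, inf a b = inf b a
  inf_assoc : ∀ a b c, inf (inf a b) c = inf a (inf b c)
  sup_inf_absorb : ∀ a b, sup a (inf a b) = a
  inf_sup_absorb : ∀ a b, inf a (sup a b) = a
  inf_sup_distrib : ∀ a b c, inf a (sup b c) = sup (inf a b) (inf a c)
  bot_sup : ∀ a, sup bot a = a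
  top_inf : ∀ a, inf top a = a
  prec_trans : ∀ a b c, prec a b → prec b c → prec a c
  prec_interpolate : ∀ a c, prec a c → ∃ b, prec a b ∧ prec b c
  join_prec : ∀ (M : List B) (a : B), (∀ m ∈ M, prec m a) ↔ prec (M.foldr sup bot) a
  prec_meet : ∀ (M : List B) (a : B), (∀ m ∈ M, prec a m) ↔ prec a (M.foldr inf top)
  inv_inv : ∀ x, inv (inv x) = x
  exchange : ∀ x y z, prec (inf x y) z ↔ prec x (sup z (inv y))
  inv_sup : ∀ x y, inv (sup x y) = inf (inv x) (inv y)
  inv_inf : ∀ x y, inv (inf x y) = sup (inv x) (inv y)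
  prec_bot : ∀ x y, prec x (inf y (inv y)) → prec x bot

/-- `↑A = {x : ∃ a ∈ A, a ≺ x}`. -/
def upSet {B : Type*} (prec : B → B → Prop) (A : Set B) : Set B :=
  {x | ∃ a ∈ A, prec a x}

/-- A `≺`-filter: nonempty, closed under binary meets, and `F = ↑F`. -/
def IsPrecFilter {B : Type*} (inf : B → B → B) (prec : B → B → Prop) (F : Set B) : Prop :=
  F.Nonempty ∧ (∀ a ∈ F, ∀ b ∈ F, inf a b ∈ F) ∧ F = upSet prec F

/-- A prime `≺`-filter: every finite join in `F` has a joinand in `F`. -/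
def IsPrimePrecFilter {B : Type*} (sup inf : B → B → B) (bot : B)
    (prec : B → B → Prop) (F : Set B) : Prop :=
  IsPrecFilter inf prec F ∧ ∀ M : List B, M.foldr sup bot ∈ F → ∃ a ∈ M, a ∈ F

/-- Pairs `(O, K)` with `O` open, `K` compact and `O ⊆ K`. -/
def OKPair (X : Type*) [TopologicalSpace X] : Type _ :=
  {s : Set X × Set X // IsOpen s.1 ∧ IsCompact s.2 ∧ s.1 ⊆ s.2}

variable {X : Type*} [TopologicalSpace X] [CompactSpace X] [T2Space X]

def okSup (p q : OKPair X) : OKPair X :=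
  ⟨(p.1.1 ∪ q.1.1, p.1.2 ∪ q.1.2), p.2.1.union q.2.1, p.2.2.1.union q.2.2.1,
    Set.union_subset_union p.2.2.2 q.2.2.2⟩

def okInf (p q : OKPair X) : OKPair X :=
  ⟨(p.1.1 ∩ q.1.1, p.1.2 ∩ q.1.2), p.2.1.inter q.2.1, p.2.2.1.inter q.2.2.1,
    Set.inter_subset_inter p.2.2.2 q.2.2.2⟩

def okInv (p : OKPair X) : OKPair X :=
  ⟨(p.1.2ᶜ, p.1.1ᶜ), p.2.2.1.isClosed.isOpen_compl,
    p.2.1.isClosed_compl.isCompact, Set.compl_subset_compl.2 p.2.2.2⟩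

def okBot : OKPair X := ⟨(∅, ∅), isOpen_empty, isCompact_empty, subset_rfl⟩

def okTop : OKPair X := ⟨(Set.univ, Set.univ), isOpen_univ, isCompact_univ, subset_rfl⟩

def okPrec (p q : OKPair X) : Prop := p.1.2 ⊆ q.1.1

lemma okPair_eq {p q : OKPair X} (h1 : p.1.1 = q.1.1) (h2 : p.1.2 = q.1.2) : p = q :=
  Subtype.ext (Prod.ext h1 h2)

/-- The filter of pairs whose open part contains `x`. -/
def Fx (x : X) : Set (OKPair X) := {p | x ∈ p.1.1}

lemma exists_pair (x : X) {O : Set X} (hO : IsOpen O) (hx : x ∈ O) :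
    ∃ a : OKPair X, x ∈ a.1.1 ∧ a.1.2 ⊆ O := by
  obtain ⟨K, hK, hxK, hKO⟩ := exists_compact_subset hO hx
  exact ⟨⟨(interior K, K), isOpen_interior, hK, interior_subset⟩, hxK, hKO⟩

lemma mem_foldr_sup (x : X) (M : List (OKPair X)) :
    x ∈ (M.foldr okSup okBot).1.1 ↔ ∃ a ∈ M, x ∈ a.1.1 := by
  induction M with
  | nil => exact ⟨fun h => absurd h (Set.notMem_empty x), fun ⟨a, ha, _⟩ => absurd ha List.not_mem_nil⟩
  | cons a M ih => simp [okSup, List.foldr, ih, Set.mem_union]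

lemma Fx_prime (x : X) : IsPrimePrecFilter okSup okInf okBot okPrec (Fx x) := by
  refine ⟨⟨⟨okTop, Set.mem_univ x⟩, fun a ha b hb => ⟨ha, hb⟩, ?_⟩, ?_⟩
  · ext p
    constructor
    · intro hp
      obtain ⟨a, hxa, hsub⟩ := exists_pair x p.2.1 hp
      exact ⟨a, hxa, hsub⟩
    · rintro ⟨a, ha, hprec⟩
      exact hprec (a.2.2.2 ha)
  · intro M hM
    exact (mem_foldr_sup x M).1 hM

lemma top_mem {F : Set (OKPair X)} (hF : IsPrecFilter okInf okPrec F) : okTop ∈ F := by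
  obtain ⟨a, ha⟩ := hF.1
  rw [hF.2.2]
  exact ⟨a, ha, Set.subset_univ _⟩

lemma bot_not_mem {F : Set (OKPair X)}
    (hF : IsPrimePrecFilter okSup okInf okBot okPrec F) : okBot ∉ F := by
  intro h
  obtain ⟨a, ha, -⟩ := hF.2 [] h
  exact List.not_mem_nil ha

lemma exists_point {F : Set (OKPair X)}
    (hF : IsPrimePrecFilter okSup okInf okBot okPrec F) : ∃ x : X, F = Fx x := by
  classical
  have hne : (⋂ a : F, (a : OKPair X).1.2).Nonempty := by
    by_contra h
    rw [Set.not_nonempty_iff_eq_empty] at h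
    obtain ⟨t, ht⟩ := isCompact_univ.elim_finite_subfamily_closed
      (fun a : F => (a : OKPair X).1.2)
      (fun a => (a : OKPair X).2.2.1.isClosed)
      (by rw [Set.univ_inter]; exact h)
    rw [Set.univ_inter] at ht
    have key : ∀ s : Finset F, ∃ b ∈ F, b.1.2 ⊆ ⋂ i ∈ s, (i : OKPair X).1.2 := by
      intro s
      induction s using Finset.induction_on with
      | empty => exact ⟨okTop, top_mem hF.1, by simp⟩
      | @insert i t hi ih =>
        obtain ⟨b, hb, hsub⟩ := ih
        refine ⟨okInf i.1 b, hF.1.2.1 _ i.2 _ hb, ?_⟩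
        rw [Finset.set_biInter_insert]
        exact Set.inter_subset_inter subset_rfl hsub
    obtain ⟨b, hb, hsub⟩ := key t
    rw [ht] at hsub
    have h2 : b.1.2 = ∅ := Set.subset_empty_iff.1 hsub
    have h1 : b.1.1 = ∅ := Set.subset_empty_iff.1 (h2 ▸ b.2.2.2)
    have : b = okBot := okPair_eq h1 h2
    exact bot_not_mem hF (this ▸ hb)
  obtain ⟨x, hx⟩ := hne
  have hxK : ∀ a ∈ F, x ∈ a.1.2 := fun a ha => Set.mem_iInter.1 hx ⟨a, ha⟩
  have key : ∀ {O : Set X}, IsOpen O → x ∈ O → ∃ a ∈ F, a.1.2 ⊆ O := by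
    intro O hO hxO
    obtain ⟨K, hKc, hxK', hKO⟩ := exists_compact_subset hO hxO
    obtain ⟨K', hK'c, hxK'', hK'K⟩ := exists_compact_subset isOpen_interior hxK'
    set a : OKPair X := ⟨(interior K, K), isOpen_interior, hKc, interior_subset⟩
    set b : OKPair X := ⟨(K'ᶜ, (interior K')ᶜ), hK'c.isClosed.isOpen_compl,
      isOpen_interior.isClosed_compl.isCompact,
      Set.compl_subset_compl.2 interior_subset⟩
    have hsup : ([a, b] : List (OKPair X)).foldr okSup okBot = okTop := by
      refine okPair_eq ?_ ?_
      · show interior K ∪ (K'ᶜ ∪ ∅) = Set.univ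
        rw [Set.union_empty, Set.eq_univ_iff_forall]
        intro y
        by_cases hy : y ∈ K'
        · exact Or.inl (hK'K hy)
        · exact Or.inr hy
      · show K ∪ ((interior K')ᶜ ∪ ∅) = Set.univ
        rw [Set.union_empty, Set.eq_univ_iff_forall]
        intro y
        by_cases hy : y ∈ interior K'
        · exact Or.inl (interior_subset (hK'K (interior_subset hy)))
        · exact Or.inr hy
    have htop : okTop ∈ F := top_mem hF.1
    obtain ⟨c, hc, hcF⟩ := hF.2 [a, b] (hsup ▸ htop)
    simp only [List.mem_cons, List.not_mem_nil, or_false] at hc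
    rcases hc with hc | hc
    · exact ⟨a, hc ▸ hcF, hKO⟩
    · exfalso
      have := hxK b (hc ▸ hcF)
      exact this hxK''
  refine ⟨x, Set.ext fun p => ⟨?_, ?_⟩⟩
  · intro hp
    have hp' : p ∈ upSet okPrec F := hF.1.2.2 ▸ hp
    obtain ⟨a, haF, hprec⟩ := hp'
    exact hprec (hxK a haF)
  · intro hp
    obtain ⟨a, haF, hsub⟩ := key p.2.1 hp
    rw [hF.1.2.2]
    exact ⟨a, haF, hsub⟩

lemma Fx_inj {x y : X} (h : Fx x = Fx (X := X) y) : x = y := by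
  by_contra hxy
  obtain ⟨U, W, hU, hW, hxU, hyW, hUW⟩ := t2_separation hxy
  obtain ⟨a, hxa, hsub⟩ := exists_pair x hU hxU
  have hay : a ∈ Fx y := h ▸ hxa
  have : y ∈ U := hsub (a.2.2.2 hay)
  exact Set.disjoint_left.1 hUW this hyW

theorem stmt17 :
    ∃ g : @Homeomorph X
        {F : Set (OKPair X) // IsPrimePrecFilter okSup okInf okBot okPrec F}
        _
        (TopologicalSpace.generateFrom
          {S | ∃ a : OKPair X,
            S = {F : {F : Set (OKPair X) // IsPrimePrecFilter okSup okInf okBot okPrec F} |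
                  a ∈ F.1}}),
      ∀ x : X, (g x).1 = {p : OKPair X | x ∈ p.1.1} := by
  classical
  letI τ : TopologicalSpace
      {F : Set (OKPair X) // IsPrimePrecFilter okSup okInf okBot okPrec F} :=
    TopologicalSpace.generateFrom
      {S | ∃ a : OKPair X,
        S = {F : {F : Set (OKPair X) // IsPrimePrecFilter okSup okInf okBot okPrec F} |
              a ∈ F.1}}
  set f : X → {F : Set (OKPair X) // IsPrimePrecFilter okSup okInf okBot okPrec F} :=
    fun x => ⟨Fx x, Fx_prime x⟩ with hf
  have hinj : Function.Injective f := fun x y h => Fx_inj (congrArg Subtype.val h)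
  have hsurj : Function.Surjective f := by
    intro F
    obtain ⟨x, hx⟩ := exists_point F.2
    exact ⟨x, Subtype.ext hx.symm⟩
  have hcont : Continuous f := by
    apply continuous_generateFrom_iff.2
    rintro S ⟨a, rfl⟩
    have : f ⁻¹' {F | a ∈ F.1} = a.1.1 := by
      ext x; simp [f, Fx]
    rw [this]
    exact a.2.1
  have hopen : IsOpenMap f := by
    intro U hU
    have himg : f '' U =
        ⋃ a : {a : OKPair X // a.1.2 ⊆ U}, {F | (a : OKPair X) ∈ F.1} := by
      ext F
      constructor
      · rintro ⟨x, hxU, rfl⟩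
        obtain ⟨a, hxa, hsub⟩ := exists_pair x hU hxU
        exact Set.mem_iUnion.2 ⟨⟨a, hsub⟩, hxa⟩
      · intro hFmem
        obtain ⟨a, ha⟩ := Set.mem_iUnion.1 hFmem
        obtain ⟨x, hx⟩ := exists_point F.2
        have hxa : x ∈ (a : OKPair X).1.1 := by
          have : (a : OKPair X) ∈ Fx x := hx ▸ ha
          exact this
        exact ⟨x, a.2 ((a : OKPair X).2.2.2 hxa), Subtype.ext hx.symm⟩
    rw [himg]
    exact isOpen_iUnion fun a =>
      TopologicalSpace.isOpen_generateFrom_of_mem ⟨a.1, rfl⟩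
  exact ⟨Equiv.toHomeomorphOfContinuousOpen
    (Equiv.ofBijective f ⟨hinj, hsurj⟩) hcont hopen, fun x => rfl⟩
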